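/- arXiv:1406.7434 — 4 statements merged into one kernel-verified Lean document; each statement's English description precedes it below -/
import Mathlib

section
/- Let δ > 2 and set t_k(δ) = k^{k(δ-2)} exp(-k^δ/2). Then there exist constants A > 0 and k_0 such that for all integers k ≥ k_0 and all 0 < s ≤ t_k(δ), the Gamma(k,1) upper quantile satisfies H_k^{-1}(1-s) = log(1/s)·(1 + q(s)) with |q(s)| ≤ A (log k)/k^{δ-1}. -/
set_option maxHeartbeats 1000000

open Real MeasureTheory Filter Set

/-- CDF of the Gamma(k,1) distribution with integer shape `k ≥ 1`. -/
noncomputable def Hgamma (k : ℕ) (x : ℝ) : ℝ :=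
  ∫ t in (0:ℝ)..x, t ^ (k - 1) * Real.exp (-t) / (Nat.factorial (k - 1) : ℝ)

/-- `t_k(δ) = k^{k(δ-2)} exp(-k^δ/2)`. -/
noncomputable def tk (δ : ℝ) (k : ℕ) : ℝ :=
  (k : ℝ) ^ ((k : ℝ) * (δ - 2)) * Real.exp (-(k : ℝ) ^ δ / 2)

lemma sum_hasDeriv (m : ℕ) (t : ℝ) :
    HasDerivAt (fun t : ℝ => ∑ j ∈ Finset.range (m+1), t^j / (Nat.factorial j : ℝ))
      (∑ j ∈ Finset.range m, t^j / (Nat.factorial j : ℝ)) t := by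
  have h : HasDerivAt (fun t : ℝ => ∑ j ∈ Finset.range (m+1), t^j / (Nat.factorial j : ℝ))
      (∑ j ∈ Finset.range (m+1), (j : ℝ) * t^(j-1) / (Nat.factorial j : ℝ)) t := by
    apply HasDerivAt.fun_sum
    intro j _
    exact (hasDerivAt_pow j t).div_const _
  convert h using 1
  rw [Finset.sum_range_succ']
  simp only [Nat.cast_add, Nat.cast_one, Nat.add_sub_cancel, Nat.factorial_succ, Nat.cast_mul,
    Nat.cast_zero, pow_zero]
  have hterm : ∀ i : ℕ, ((i:ℝ)+1) * t^i / (((i:ℝ)+1) * (Nat.factorial i : ℝ)) = t^i / (Nat.factorial i : ℝ) :=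
    fun i => mul_div_mul_left _ _ (by positivity)
  simp only [hterm]
  simp

lemma tail_formula (m : ℕ) (x : ℝ) :
    Hgamma (m+1) x = 1 - Real.exp (-x) * ∑ j ∈ Finset.range (m+1), x^j / (Nat.factorial j : ℝ) := by
  have key : ∀ t : ℝ, HasDerivAt
      (fun t : ℝ => -(Real.exp (-t) * ∑ j ∈ Finset.range (m+1), t^j / (Nat.factorial j : ℝ)))
      (t ^ m * Real.exp (-t) / (Nat.factorial m : ℝ)) t := by
    intro t
    have he : HasDerivAt (fun t : ℝ => Real.exp (-t)) (-Real.exp (-t)) t := by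
      simpa using (hasDerivAt_neg t).exp
    have := (he.fun_mul (sum_hasDeriv m t)).fun_neg
    refine this.congr_deriv ?_
    rw [Finset.sum_range_succ]
    field_simp
    ring
  have hint : IntervalIntegrable (fun t : ℝ => t ^ m * Real.exp (-t) / (Nat.factorial m : ℝ))
      MeasureTheory.volume 0 x := by
    apply Continuous.intervalIntegrable
    continuity
  have := intervalIntegral.integral_eq_sub_of_hasDerivAt (fun t _ => key t) hint
  rw [Hgamma]
  simp only [Nat.add_sub_cancel] at this ⊢
  rw [this]
  have : ∑ j ∈ Finset.range (m+1), (0:ℝ)^j / (Nat.factorial j : ℝ) = 1 := by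
    rw [Finset.sum_eq_single 0] <;> simp +contextual [zero_pow]
  simp [this]
  ring

lemma sumLB (m : ℕ) (x : ℝ) (hx : 0 ≤ x) :
    1 ≤ ∑ j ∈ Finset.range (m+1), x^j / (Nat.factorial j : ℝ) := by
  have h0 : ((0:ℕ) ∈ Finset.range (m+1)) := by simp
  have := Finset.single_le_sum (f := fun j => x^j / (Nat.factorial j : ℝ))
    (fun i _ => by positivity) h0
  simpa using this

lemma sumUB (m : ℕ) (x : ℝ) (hx : ((m:ℝ)+1) ≤ x) :
    ∑ j ∈ Finset.range (m+1), x^j / (Nat.factorial j : ℝ) ≤ x^(m+1) := by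
  have hx1 : (1:ℝ) ≤ x := by
    have : (0:ℝ) ≤ m := Nat.cast_nonneg m
    linarith
  have hterm : ∀ j ∈ Finset.range (m+1), x^j / (Nat.factorial j : ℝ) ≤ x^m := by
    intro j hj
    have hj' : j ≤ m := Nat.lt_succ_iff.mp (Finset.mem_range.mp hj)
    have h1 : x^j / (Nat.factorial j : ℝ) ≤ x^j := by
      apply div_le_self (by positivity)
      exact_mod_cast Nat.one_le_iff_ne_zero.mpr (Nat.factorial_ne_zero j)
    have h2 : x^j ≤ x^m := pow_le_pow_right₀ hx1 hj'
    linarith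
  calc ∑ j ∈ Finset.range (m+1), x^j / (Nat.factorial j : ℝ)
      ≤ ∑ _j ∈ Finset.range (m+1), x^m := Finset.sum_le_sum hterm
    _ = ((m:ℝ)+1) * x^m := by simp [mul_comm]
    _ ≤ x * x^m := by
        apply mul_le_mul_of_nonneg_right hx (by positivity)
    _ = x^(m+1) := (pow_succ' x m).symm

lemma evlog (r c : ℝ) (hr : 0 < r) (hc : 0 < c) :
    ∀ᶠ k : ℕ in atTop, Real.log k ≤ c * (k:ℝ)^r := by
  have h := (isLittleO_log_rpow_atTop hr).def hc
  have h2 := tendsto_natCast_atTop_atTop (R := ℝ) |>.eventually h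
  filter_upwards [h2, eventually_ge_atTop 1] with k hk hk1
  have hk0 : (0:ℝ) < k := by exact_mod_cast hk1
  have : ‖Real.log k‖ ≤ c * ‖(k:ℝ)^r‖ := hk
  rw [Real.norm_eq_abs, Real.norm_eq_abs, abs_of_nonneg (Real.rpow_nonneg hk0.le r)] at this
  exact (le_abs_self _).trans this

lemma tail_formula' (k : ℕ) (hk : 1 ≤ k) (x : ℝ) :
    Hgamma k x = 1 - Real.exp (-x) * ∑ j ∈ Finset.range k, x^j / (Nat.factorial j : ℝ) := by
  obtain ⟨m, rfl⟩ := Nat.exists_eq_succ_of_ne_zero (by omega : k ≠ 0)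
  exact tail_formula m x

lemma sumLB' (k : ℕ) (hk : 1 ≤ k) (x : ℝ) (hx : 0 ≤ x) :
    1 ≤ ∑ j ∈ Finset.range k, x^j / (Nat.factorial j : ℝ) := by
  obtain ⟨m, rfl⟩ := Nat.exists_eq_succ_of_ne_zero (by omega : k ≠ 0)
  exact sumLB m x hx

lemma sumUB' (k : ℕ) (hk : 1 ≤ k) (x : ℝ) (hx : (k:ℝ) ≤ x) :
    ∑ j ∈ Finset.range k, x^j / (Nat.factorial j : ℝ) ≤ x^k := by
  obtain ⟨m, rfl⟩ := Nat.exists_eq_succ_of_ne_zero (by omega : k ≠ 0)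
  apply sumUB m x
  push_cast at hx ⊢
  linarith

lemma arith (δ k P L x lx lL lg D : ℝ) (hδ : 2 < δ) (hk : 4 ≤ k) (hP : 4 ≤ P)
    (hlg : 1 ≤ lg) (hL : 0 < L) (hD : 0 ≤ D) (hDP : D*P = L) (hkP4L : k*P ≤ 4*L)
    (hq1 : x - L ≤ k*lx) (hlx : lx ≤ 2 + lL) (hlL : k*lL ≤ 4*D + k*(δ*lg) - k) :
    (x - L)*P ≤ (8*δ+4)*lg*L := by
  have hk0 : (0:ℝ) < k := by linarith
  have hP0 : (0:ℝ) < P := by linarith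
  have hdlg : 1 ≤ δ*lg := by nlinarith
  have e0 : k ≤ 4*D := by nlinarith
  have e1 : x - L ≤ 2*k + k*lL := by nlinarith [mul_le_mul_of_nonneg_left hlx hk0.le]
  have e2 : x - L ≤ k + 4*D + k*(δ*lg) := by linarith
  have e3 : k + k*(δ*lg) ≤ 2*(k*(δ*lg)) := by nlinarith
  have e4 : 2*(k*(δ*lg)) ≤ 2*((4*D)*(δ*lg)) := by nlinarith
  have e5 : x - L ≤ 8*D*(δ*lg) + 4*D := by linarith
  have e6 : (x - L)*P ≤ (8*D*(δ*lg) + 4*D)*P :=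
    mul_le_mul_of_nonneg_right e5 hP0.le
  have e7 : (8*D*(δ*lg) + 4*D)*P = 8*δ*lg*L + 4*L := by
    linear_combination (8*δ*lg + 4) * hDP
  have e8 : 4*L ≤ 4*lg*L := by nlinarith
  nlinarith

theorem stmt8 (δ : ℝ) (hδ : 2 < δ) (Hinv : ℕ → ℝ → ℝ)
    (hinv : ∀ k : ℕ, 1 ≤ k → ∀ s ∈ Set.Ioo (0:ℝ) 1,
      Hgamma k (Hinv k s) = s ∧ 0 < Hinv k s) :
    ∃ A > (0:ℝ), ∃ k₀ : ℕ, ∀ k : ℕ, k₀ ≤ k → ∀ s : ℝ, 0 < s → s ≤ tk δ k →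
      ∃ q : ℝ, Hinv k (1 - s) = Real.log (1 / s) * (1 + q) ∧
        |q| ≤ A * Real.log k / (k : ℝ) ^ (δ - 1) := by
  have hδ2 : (0:ℝ) < δ - 2 := by linarith
  have hδ1 : (0:ℝ) < δ - 1 := by linarith
  -- collect eventual conditions
  have hev : ∀ᶠ k : ℕ in atTop,
      ((δ-2) * Real.log k ≤ (k:ℝ)^(δ-1)/4 ∧ 16 * Real.log k ≤ (k:ℝ)^(δ-1)) ∧
      (4 ≤ k ∧ 1 ≤ Real.log k) := by
    have e1 := evlog (δ-1) (1/(4*(δ-2))) hδ1 (by positivity)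
    have e2 := evlog (δ-1) (1/16) hδ1 (by norm_num)
    have e3 : ∀ᶠ k : ℕ in atTop, 4 ≤ k := eventually_ge_atTop 4
    have e4 : ∀ᶠ k : ℕ in atTop, 1 ≤ Real.log k := by
      filter_upwards [eventually_ge_atTop 3] with k hk
      have h3 : (3:ℝ) ≤ k := by exact_mod_cast hk
      have : Real.exp 1 ≤ 3 := by
        have := Real.exp_one_lt_d9
        linarith
      calc (1:ℝ) = Real.log (Real.exp 1) := (Real.log_exp 1).symm
        _ ≤ Real.log 3 := Real.log_le_log (Real.exp_pos 1) (by linarith)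
        _ ≤ Real.log k := Real.log_le_log (by norm_num) h3
    filter_upwards [e1, e2, e3, e4] with k h1 h2 h3 h4
    refine ⟨⟨?_, ?_⟩, h3, h4⟩
    · have h := mul_le_mul_of_nonneg_left h1 hδ2.le
      have heq : (δ-2) * (1/(4*(δ-2)) * ((k:ℝ)^(δ-1))) = (k:ℝ)^(δ-1)/4 := by
        field_simp
      linarith
    · linarith
  obtain ⟨k₀, hk₀⟩ := eventually_atTop.mp hev
  refine ⟨8*δ+4, by linarith, k₀, ?_⟩
  intro k hkk s hs0 hst
  obtain ⟨⟨hE2, hE3⟩, hk4, hlogk⟩ := hk₀ k hkk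
  have hk1 : 1 ≤ k := by omega
  have hk4' : (4:ℝ) ≤ (k:ℝ) := by exact_mod_cast hk4
  have hkpos : (0:ℝ) < k := by linarith
  set P := (k:ℝ)^(δ-1) with hPdef
  have hPpos : 0 < P := Real.rpow_pos_of_pos hkpos _
  have hkd : (k:ℝ)^δ = k * P := by
    have h : (k:ℝ)^δ = (k:ℝ)^(1 + (δ-1)) := by ring_nf
    rw [h, Real.rpow_add hkpos, Real.rpow_one]
  have hP4 : 4 ≤ P := by
    have h : (k:ℝ)^(1:ℝ) ≤ (k:ℝ)^(δ-1) :=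
      Real.rpow_le_rpow_of_exponent_le (by linarith) (by linarith)
    rw [Real.rpow_one] at h
    linarith
  have htkpos : 0 < tk δ k := by
    rw [tk]; positivity
  have hlogtk : Real.log (tk δ k) = (k:ℝ)*(δ-2)*Real.log k - (k:ℝ)^δ/2 := by
    rw [tk, Real.log_mul (by positivity) (Real.exp_ne_zero _), Real.log_rpow hkpos,
      Real.log_exp]
    ring
  have hE2k : (k:ℝ)*((δ-2)*Real.log k) ≤ (k:ℝ)*(P/4) :=
    mul_le_mul_of_nonneg_left hE2 hkpos.le
  have htk1 : tk δ k < 1 := by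
    have hlt : Real.log (tk δ k) < 0 := by
      rw [hlogtk]
      nlinarith
    calc tk δ k = Real.exp (Real.log (tk δ k)) := (Real.exp_log htkpos).symm
      _ < Real.exp 0 := Real.exp_lt_exp.mpr hlt
      _ = 1 := Real.exp_zero
  have hs1 : s < 1 := lt_of_le_of_lt hst htk1
  obtain ⟨hHx, hxpos⟩ := hinv k hk1 (1-s) ⟨by linarith, by linarith⟩
  set x := Hinv k (1-s) with hxdef
  set L := Real.log (1/s) with hLdef
  have hLs : L = -Real.log s := by rw [hLdef, one_div, Real.log_inv]
  have hLlb : (k:ℝ)*P/4 ≤ L := by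
    have h1 : Real.log s ≤ Real.log (tk δ k) := Real.log_le_log hs0 hst
    rw [hlogtk] at h1
    rw [hLs]
    nlinarith
  have hLk : (k:ℝ) ≤ L := by nlinarith
  have hLpos : 0 < L := by linarith
  have hS : Real.exp (-x) * (∑ j ∈ Finset.range k, x^j / (Nat.factorial j : ℝ)) = s := by
    have ht := tail_formula' k hk1 x
    rw [hHx] at ht
    linarith
  have hSum1 : 1 ≤ ∑ j ∈ Finset.range k, x^j / (Nat.factorial j : ℝ) :=
    sumLB' k hk1 x hxpos.le
  have hxL : L ≤ x := by
    have hes : Real.exp (-x) ≤ s := by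
      calc Real.exp (-x) = Real.exp (-x) * 1 := by ring
        _ ≤ Real.exp (-x) * (∑ j ∈ Finset.range k, x^j / (Nat.factorial j : ℝ)) :=
            mul_le_mul_of_nonneg_left hSum1 (Real.exp_pos _).le
        _ = s := hS
    have h2 := Real.log_le_log (Real.exp_pos _) hes
    rw [Real.log_exp] at h2
    rw [hLs]; linarith
  have hkx : (k:ℝ) ≤ x := by linarith
  have hSumUB : (∑ j ∈ Finset.range k, x^j / (Nat.factorial j : ℝ)) ≤ x^k :=
    sumUB' k hk1 x hkx
  have hxk : x ≤ L + (k:ℝ) * Real.log x := by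
    have h : s ≤ Real.exp (-x) * x^k := by
      calc s = Real.exp (-x) * (∑ j ∈ Finset.range k, x^j / (Nat.factorial j : ℝ)) := hS.symm
        _ ≤ Real.exp (-x) * x^k := mul_le_mul_of_nonneg_left hSumUB (Real.exp_pos _).le
    have h2 := Real.log_le_log hs0 h
    rw [Real.log_mul (Real.exp_ne_zero _) (by positivity), Real.log_exp, Real.log_pow] at h2
    rw [hLs]
    push_cast at h2
    linarith
  have hlogx0 : 0 ≤ Real.log x := Real.log_nonneg (by linarith)
  -- x ≤ 3 L
  have h2k : (k:ℝ)*Real.log x ≤ x/2 + (k:ℝ)*Real.log (2*k) := by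
    have h := Real.log_le_sub_one_of_pos (show (0:ℝ) < x/(2*k) by positivity)
    rw [Real.log_div (by positivity) (by positivity)] at h
    have hhalf : (k:ℝ)*(x/(2*(k:ℝ))) = x/2 := by field_simp
    nlinarith
  have hlog2k : Real.log (2*(k:ℝ)) ≤ 2 * Real.log k := by
    rw [Real.log_mul (by norm_num) (by positivity)]
    have h2 : Real.log 2 ≤ 1 := by
      have := Real.log_le_sub_one_of_pos (show (0:ℝ) < 2 by norm_num)
      linarith
    linarith
  have h2klog : 2*(k:ℝ)*Real.log (2*k) ≤ L := by
    have hE3k : (k:ℝ)*(16*Real.log k) ≤ (k:ℝ)*P := mul_le_mul_of_nonneg_left hE3 hkpos.le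
    nlinarith [mul_le_mul_of_nonneg_left hlog2k (by positivity : (0:ℝ) ≤ 2*(k:ℝ)),
      mul_pos hkpos (Real.log_pos (by linarith) : 0 < Real.log k)]
  have hx3L : x ≤ 3*L := by nlinarith
  have hlogx3L : Real.log x ≤ Real.log 3 + Real.log L := by
    have h := Real.log_le_log hxpos hx3L
    rw [Real.log_mul (by norm_num) hLpos.ne'] at h
    exact h
  have hlog3 : Real.log 3 ≤ 2 := by
    have := Real.log_le_sub_one_of_pos (show (0:ℝ) < 3 by norm_num)
    linarith
  have hlogL : Real.log L ≤ 4*L/((k:ℝ)*P) + δ*Real.log k - 1 := by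
    have h := Real.log_le_sub_one_of_pos (show (0:ℝ) < L/((k:ℝ)*P/4) by positivity)
    rw [Real.log_div hLpos.ne' (by positivity)] at h
    have hlogL0 : Real.log ((k:ℝ)*P/4) ≤ δ * Real.log k := by
      have h1 : Real.log ((k:ℝ)*P/4) ≤ Real.log ((k:ℝ)^δ) := by
        apply Real.log_le_log (by positivity)
        rw [hkd]; linarith [mul_pos hkpos hPpos]
      rw [Real.log_rpow hkpos] at h1
      exact h1
    have hfrac : L/((k:ℝ)*P/4) = 4*L/((k:ℝ)*P) := by
      field_simp
    rw [hfrac] at h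
    linarith
  have hD : (L/P)*P = L := by field_simp
  have hDpos : 0 ≤ L/P := by positivity
  have hfinal : (x - L) * P ≤ (8*δ+4) * Real.log k * L := by
    have hq1 : x - L ≤ (k:ℝ)*Real.log x := by linarith
    have heq2 : (k:ℝ)*(4*L/((k:ℝ)*P)) = 4*(L/P) := by field_simp
    have hq3 : (k:ℝ)*Real.log L ≤ 4*(L/P) + (k:ℝ)*(δ*Real.log k) - k := by
      have h := mul_le_mul_of_nonneg_left hlogL hkpos.le
      rw [mul_sub, mul_add, heq2] at h
      linarith
    have hkP4L : (k:ℝ)*P ≤ 4*L := by linarith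
    exact arith δ (k:ℝ) P L x (Real.log x) (Real.log L) (Real.log k) (L/P) hδ
      (by linarith) hP4 hlogk hLpos hDpos hD hkP4L hq1 (by linarith) hq3
  refine ⟨x/L - 1, ?_, ?_⟩
  · have h : L*(1+(x/L-1)) = x := by field_simp; ring
    exact h.symm
  · have hq0 : 0 ≤ x/L - 1 := by
      have := (one_le_div hLpos).mpr hxL
      linarith
    rw [abs_of_nonneg hq0]
    have hrw : x/L - 1 = (x-L)/L := by
      rw [sub_div, div_self hLpos.ne']
    rw [hrw, div_le_div_iff₀ hLpos hPpos]
    linarith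
end

section
/- Fix an integer k ≥ 1 and define φ(s) = H_k'(H_k^{-1}(s)) · H_k^{-1}(s) for 0 < s < 1, where H_k' is the Gamma(k,1) density. Then for each 0 < h < 1, the function s ↦ φ(s+h) − φ(s) on (0, 1−h) has derivative H_k^{-1}(s) − H_k^{-1}(s+h) < 0, hence is strictly decreasing, and consequently sup_{0 ≤ s ≤ 1-h} |φ(s+h) − φ(s)| = max{ |φ(h) − φ(0+)|, |φ(1−) − φ(1−h)| }. -/
open Real MeasureTheory Filter Set

/-- Density of the Gamma(k,1) distribution. -/
noncomputable def Hpdf (k : ℕ) (x : ℝ) : ℝ :=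
  x ^ (k - 1) * Real.exp (-x) / (Nat.factorial (k - 1) : ℝ)

lemma hpdf_cont (k : ℕ) : Continuous (Hpdf k) := by
  unfold Hpdf; fun_prop

lemma hpdf_pos (k : ℕ) {x : ℝ} (hx : 0 < x) : 0 < Hpdf k x := by
  unfold Hpdf; positivity

lemma hpdf_eq (k : ℕ) :
    Hpdf k = fun x => (Real.exp (-x) * x ^ (((k-1:ℕ)+1:ℝ) - 1)) / (Nat.factorial (k-1) : ℝ) := by
  funext x
  rw [Hpdf]
  norm_num
  ring

lemma hpdf_integrable (k : ℕ) : IntegrableOn (Hpdf k) (Ioi 0) := by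
  rw [hpdf_eq]
  exact (Real.GammaIntegral_convergent (by positivity : (0:ℝ) < (k-1:ℕ)+1)).div_const _

lemma hpdf_integral (k : ℕ) : ∫ x in Ioi (0:ℝ), Hpdf k x = 1 := by
  rw [hpdf_eq, integral_div,
    ← Real.Gamma_eq_integral (by positivity : (0:ℝ) < (k-1:ℕ)+1),
    Real.Gamma_nat_eq_factorial, div_self]
  positivity

lemma hgamma_deriv (k : ℕ) (x : ℝ) : HasDerivAt (Hgamma k) (Hpdf k x) x := by
  have : HasDerivAt (fun u => ∫ t in (0:ℝ)..u, Hpdf k t) (Hpdf k x) x := by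
    apply intervalIntegral.integral_hasDerivAt_right
    · exact (hpdf_cont k).intervalIntegrable _ _
    · exact (hpdf_cont k).stronglyMeasurableAtFilter _ _
    · exact (hpdf_cont k).continuousAt
  exact this

lemma hgamma_mono (k : ℕ) : StrictMonoOn (Hgamma k) (Ici 0) := by
  apply strictMonoOn_of_deriv_pos (convex_Ici 0)
  · exact fun x _ => (hgamma_deriv k x).continuousAt.continuousWithinAt
  · intro x hx
    rw [interior_Ici] at hx
    rw [(hgamma_deriv k x).deriv]
    exact hpdf_pos k hx

lemma hgamma_zero (k : ℕ) : Hgamma k 0 = 0 := by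
  unfold Hgamma; simp

lemma hgamma_le_one (k : ℕ) {x : ℝ} (hx : 0 ≤ x) : Hgamma k x ≤ 1 := by
  have heq : Hgamma k x = ∫ t in Ioc (0:ℝ) x, Hpdf k t := by
    rw [Hgamma, intervalIntegral.integral_of_le hx]; rfl
  rw [heq, ← hpdf_integral k]
  apply setIntegral_mono_set (hpdf_integrable k)
  · exact (ae_restrict_iff' measurableSet_Ioi).2 (Eventually.of_forall fun t ht => (hpdf_pos k ht).le)
  · exact HasSubset.Subset.eventuallyLE Ioc_subset_Ioi_self

lemma hgamma_lt_one (k : ℕ) {x : ℝ} (hx : 0 ≤ x) : Hgamma k x < 1 :=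
  lt_of_lt_of_le (hgamma_mono k hx (by linarith : (0:ℝ) ≤ x + 1) (by linarith))
    (hgamma_le_one k (by linarith))

lemma hgamma_pos (k : ℕ) {x : ℝ} (hx : 0 < x) : 0 < Hgamma k x := by
  have := hgamma_mono k (le_refl (0:ℝ)) hx.le hx
  rwa [hgamma_zero] at this

lemma xhpdf_deriv (k : ℕ) (hk : 1 ≤ k) (x : ℝ) :
    HasDerivAt (fun x => Hpdf k x * x) (Hpdf k x * ((k:ℝ) - x)) x := by
  obtain ⟨m, rfl⟩ : ∃ m, k = m + 1 := ⟨k - 1, (Nat.succ_pred_eq_of_pos hk).symm⟩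
  simp only [Hpdf, Nat.add_sub_cancel]
  have h1 : HasDerivAt (fun x : ℝ => x ^ (m+1) * Real.exp (-x) / (Nat.factorial m : ℝ))
      ((((m:ℝ)+1) * x ^ m * Real.exp (-x) + x ^ (m+1) * (Real.exp (-x) * (-1))) /
        (Nat.factorial m : ℝ)) x := by
    apply HasDerivAt.div_const
    have := (hasDerivAt_pow (m+1) x).mul (((hasDerivAt_id x).neg).exp)
    simpa [Pi.mul_def] using this
  have h2 : (fun x : ℝ => x ^ m * Real.exp (-x) / (Nat.factorial m : ℝ) * x)
      = (fun x : ℝ => x ^ (m+1) * Real.exp (-x) / (Nat.factorial m : ℝ)) := by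
    funext y; ring
  rw [h2]
  convert h1 using 1
  push_cast
  ring

lemma xhpdf_tendsto (k : ℕ) (hk : 1 ≤ k) :
    Tendsto (fun x => Hpdf k x * x) atTop (nhds 0) := by
  obtain ⟨m, rfl⟩ : ∃ m, k = m + 1 := ⟨k - 1, (Nat.succ_pred_eq_of_pos hk).symm⟩
  have h1 : Tendsto (fun x : ℝ => x ^ (m+1) * Real.exp (-x) / (Nat.factorial m : ℝ))
      atTop (nhds (0 / (Nat.factorial m : ℝ))) :=
    (tendsto_pow_mul_exp_neg_atTop_nhds_zero (m+1)).div_const _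
  rw [zero_div] at h1
  convert h1 using 2 with x
  simp only [Hpdf, Nat.add_sub_cancel]
  ring

theorem stmt12 (k : ℕ) (hk : 1 ≤ k) (Hinv : ℝ → ℝ)
    (hinv : ∀ s ∈ Set.Ioo (0:ℝ) 1, Hgamma k (Hinv s) = s ∧ 0 < Hinv s)
    (hinv0 : Hinv 0 = 0) (hext1 : Hpdf k (Hinv 1) * Hinv 1 = 0)
    (h : ℝ) (hh0 : 0 < h) (hh1 : h < 1) :
    (∀ s ∈ Set.Ioo (0:ℝ) (1 - h),
        HasDerivAt
          (fun u => Hpdf k (Hinv (u + h)) * Hinv (u + h) - Hpdf k (Hinv u) * Hinv u)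
          (Hinv s - Hinv (s + h)) s ∧ Hinv s - Hinv (s + h) < 0) ∧
    StrictAntiOn
      (fun s => Hpdf k (Hinv (s + h)) * Hinv (s + h) - Hpdf k (Hinv s) * Hinv s)
      (Set.Ioo 0 (1 - h)) ∧
    sSup ((fun s => |Hpdf k (Hinv (s + h)) * Hinv (s + h) - Hpdf k (Hinv s) * Hinv s|) ''
        Set.Icc 0 (1 - h))
      = max |Hpdf k (Hinv h) * Hinv h - Hpdf k (Hinv 0) * Hinv 0|
          |Hpdf k (Hinv 1) * Hinv 1 - Hpdf k (Hinv (1 - h)) * Hinv (1 - h)| := by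
  set φ : ℝ → ℝ := fun u => Hpdf k (Hinv u) * Hinv u with hφdef
  set ψ : ℝ → ℝ := fun s => Hpdf k (Hinv (s + h)) * Hinv (s + h) - Hpdf k (Hinv s) * Hinv s
    with hψdef
  -- comparison lemmas for Hinv
  have cmp_lt : ∀ ⦃s⦄, s ∈ Ioo (0:ℝ) 1 → ∀ ⦃x : ℝ⦄, 0 ≤ x → s < Hgamma k x → Hinv s < x := by
    intro s hs x hx hsx
    by_contra hc
    push_neg at hc
    have := (hgamma_mono k).monotoneOn hx (le_of_lt (hinv s hs).2) hc
    rw [(hinv s hs).1] at this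
    linarith
  have cmp_gt : ∀ ⦃s⦄, s ∈ Ioo (0:ℝ) 1 → ∀ ⦃x : ℝ⦄, 0 ≤ x → Hgamma k x < s → x < Hinv s := by
    intro s hs x hx hsx
    by_contra hc
    push_neg at hc
    have := (hgamma_mono k).monotoneOn (le_of_lt (hinv s hs).2) hx hc
    rw [(hinv s hs).1] at this
    linarith
  have hmono : ∀ ⦃s⦄, s ∈ Ioo (0:ℝ) 1 → ∀ ⦃t⦄, t ∈ Ioo (0:ℝ) 1 → s < t → Hinv s < Hinv t := by
    intro s hs t ht hst
    apply cmp_gt ht (le_of_lt (hinv s hs).2)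
    rw [(hinv s hs).1]; exact hst
  -- continuity of Hinv on (0,1)
  have hcont : ∀ s ∈ Ioo (0:ℝ) 1, ContinuousAt Hinv s := by
    intro s hs
    rw [Metric.continuousAt_iff']
    intro ε hε
    set y := Hinv s with hy
    have hy0 : 0 < y := (hinv s hs).2
    set ε' := min (ε/2) (y/2) with hε'
    have hε'0 : 0 < ε' := lt_min (by linarith) (by linarith)
    have hε'ε : ε' < ε := lt_of_le_of_lt (min_le_left _ _) (by linarith)
    have hyε : 0 ≤ y - ε' := by
      have := min_le_right (ε/2) (y/2); simp only [← hε'] at this; linarith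
    have ha : Hgamma k (y - ε') < s := by
      have := hgamma_mono k hyε (by linarith : (0:ℝ) ≤ y) (by linarith)
      rwa [(hinv s hs).1] at this
    have hb : s < Hgamma k (y + ε') := by
      have := hgamma_mono k (by linarith : (0:ℝ) ≤ y) (by linarith : (0:ℝ) ≤ y + ε')
        (by linarith)
      rwa [(hinv s hs).1] at this
    have hmem : Ioo (max (Hgamma k (y - ε')) 0) (min (Hgamma k (y + ε')) 1) ∈ nhds s := by
      apply Ioo_mem_nhds
      · exact max_lt ha hs.1
      · exact lt_min hb hs.2
    filter_upwards [hmem] with t ht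
    have ht01 : t ∈ Ioo (0:ℝ) 1 :=
      ⟨lt_of_le_of_lt (le_max_right _ _) ht.1, lt_of_lt_of_le ht.2 (min_le_right _ _)⟩
    have h1 : Hinv t < y + ε' :=
      cmp_lt ht01 (by linarith) (lt_of_lt_of_le ht.2 (min_le_left _ _))
    have h2 : y - ε' < Hinv t :=
      cmp_gt ht01 hyε (lt_of_le_of_lt (le_max_left _ _) ht.1)
    rw [Real.dist_eq, abs_lt]
    constructor <;> [linarith; linarith]
  -- derivative of φ on (0,1)
  have hderφ : ∀ s ∈ Ioo (0:ℝ) 1, HasDerivAt φ ((k:ℝ) - Hinv s) s := by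
    intro s hs
    have hpd : Hpdf k (Hinv s) ≠ 0 := ne_of_gt (hpdf_pos k (hinv s hs).2)
    have hinvder : HasDerivAt Hinv (Hpdf k (Hinv s))⁻¹ s := by
      apply HasDerivAt.of_local_left_inverse (hcont s hs) (hgamma_deriv k (Hinv s)) hpd
      filter_upwards [Ioo_mem_nhds hs.1 hs.2] with t ht
      exact (hinv t ht).1
    have := (xhpdf_deriv k hk (Hinv s)).comp s hinvder
    refine this.congr_deriv ?_
    field_simp
  -- derivative of ψ on (0, 1-h)
  have hsub : ∀ s ∈ Ioo (0:ℝ) (1-h), s ∈ Ioo (0:ℝ) 1 ∧ s + h ∈ Ioo (0:ℝ) 1 := by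
    intro s hs
    exact ⟨⟨hs.1, by linarith [hs.2]⟩, ⟨by linarith [hs.1], by linarith [hs.2]⟩⟩
  have hderψ : ∀ s ∈ Ioo (0:ℝ) (1-h), HasDerivAt ψ (Hinv s - Hinv (s + h)) s := by
    intro s hs
    obtain ⟨hs1, hs2⟩ := hsub s hs
    have hA : HasDerivAt (fun u => φ (u + h)) ((k:ℝ) - Hinv (s + h)) s := by
      have := (hderφ (s+h) hs2).comp s ((hasDerivAt_id s).add_const h)
      simpa [Function.comp_def] using this
    have := hA.sub (hderφ s hs1)
    refine this.congr_deriv ?_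
    ring
  have hneg : ∀ s ∈ Ioo (0:ℝ) (1-h), Hinv s - Hinv (s + h) < 0 := by
    intro s hs
    obtain ⟨hs1, hs2⟩ := hsub s hs
    have := hmono hs1 hs2 (by linarith)
    linarith
  -- limits at the endpoints
  have tend0 : Tendsto φ (nhdsWithin 0 (Ioi 0)) (nhds 0) := by
    have hHinv0 : Tendsto Hinv (nhdsWithin 0 (Ioi 0)) (nhds 0) := by
      rw [Metric.tendsto_nhds]
      intro ε hε
      have hmem : Ioo (0:ℝ) (min (Hgamma k ε) 1) ∈ nhdsWithin (0:ℝ) (Ioi 0) := by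
        apply Ioo_mem_nhdsGT_of_mem
        exact ⟨le_refl 0, lt_min (hgamma_pos k hε) one_pos⟩
      filter_upwards [hmem] with t ht
      have ht01 : t ∈ Ioo (0:ℝ) 1 := ⟨ht.1, lt_of_lt_of_le ht.2 (min_le_right _ _)⟩
      have h1 : Hinv t < ε := cmp_lt ht01 hε.le (lt_of_lt_of_le ht.2 (min_le_left _ _))
      have h2 : 0 < Hinv t := (hinv t ht01).2
      rw [Real.dist_eq, abs_lt]
      constructor <;> [linarith; linarith]
    have hc : Tendsto (fun x => Hpdf k x * x) (nhds 0) (nhds (Hpdf k 0 * 0)) :=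
      ((hpdf_cont k).mul continuous_id).continuousAt
    rw [mul_zero] at hc
    exact hc.comp hHinv0
  have tend1 : Tendsto φ (nhdsWithin 1 (Iio 1)) (nhds 0) := by
    have hHinvTop : Tendsto Hinv (nhdsWithin 1 (Iio 1)) atTop := by
      rw [tendsto_atTop]
      intro M
      set b := Hgamma k (max M 0 + 1) with hb
      have hb1 : b < 1 := hgamma_lt_one k (by positivity)
      have hmem : Ioo (max b 0) 1 ∈ nhdsWithin (1:ℝ) (Iio 1) := by
        apply Ioo_mem_nhdsLT_of_mem
        exact ⟨max_lt hb1 one_pos, le_refl 1⟩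
      filter_upwards [hmem] with t ht
      have ht01 : t ∈ Ioo (0:ℝ) 1 := ⟨lt_of_le_of_lt (le_max_right _ _) ht.1, ht.2⟩
      have := cmp_gt ht01 (by positivity : (0:ℝ) ≤ max M 0 + 1)
        (lt_of_le_of_lt (le_max_left _ _) ht.1)
      have := le_max_left M 0
      linarith [cmp_gt ht01 (by positivity : (0:ℝ) ≤ max M 0 + 1)
        (lt_of_le_of_lt (le_max_left _ _) ht.1)]
    exact (xhpdf_tendsto k hk).comp hHinvTop
  have hφ0 : φ 0 = 0 := by
    simp only [hφdef, hinv0, mul_zero]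
  have hφ1 : φ 1 = 0 := hext1
  have h1h : (0:ℝ) < 1 - h := by linarith
  -- continuity of ψ on [0, 1-h]
  have hcontψ : ContinuousOn ψ (Icc 0 (1-h)) := by
    intro s hs
    rcases eq_or_lt_of_le hs.1 with h0 | h0
    · -- s = 0
      subst h0
      apply ContinuousWithinAt.sub
      · -- fun u => φ (u + h) at 0
        apply ContinuousAt.continuousWithinAt
        have hA : HasDerivAt (fun u => φ (u + h)) ((k:ℝ) - Hinv (0 + h)) 0 := by
          have hm : (0:ℝ) + h ∈ Ioo (0:ℝ) 1 := by
            simpa using (⟨hh0, hh1⟩ : h ∈ Ioo (0:ℝ) 1)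
          have := (hderφ (0+h) hm).comp 0 ((hasDerivAt_id 0).add_const h)
          simpa [Function.comp_def] using this
        exact hA.continuousAt
      · -- φ at 0 within Icc
        have hsup : Tendsto φ (nhdsWithin 0 (Ici 0)) (nhds 0) := by
          rw [show Ici (0:ℝ) = insert 0 (Ioi 0) by rw [Ioi_insert], nhdsWithin_insert]
          apply Tendsto.sup
          · simpa [hφ0] using tendsto_pure_nhds φ 0
          · exact tend0
        have : Tendsto φ (nhdsWithin 0 (Icc 0 (1-h))) (nhds (φ 0)) := by
          rw [hφ0]
          exact hsup.mono_left (nhdsWithin_mono _ Icc_subset_Ici_self)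
        exact this
    rcases eq_or_lt_of_le hs.2 with h1 | h1
    · -- s = 1 - h
      subst h1
      apply ContinuousWithinAt.sub
      · -- fun u => φ (u + h) at 1 - h within Icc
        have hmap : Tendsto (fun u : ℝ => u + h) (nhdsWithin (1-h) (Icc 0 (1-h)))
            (nhdsWithin 1 (Iic 1)) := by
          apply tendsto_nhdsWithin_of_tendsto_nhds_of_eventually_within
          · have : Tendsto (fun u : ℝ => u + h) (nhds (1-h)) (nhds ((1-h) + h)) :=
              (continuous_id.add continuous_const).continuousAt
            rw [sub_add_cancel] at this
            exact this.mono_left nhdsWithin_le_nhds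
          · filter_upwards [self_mem_nhdsWithin] with u hu
            simp only [mem_Iic]
            linarith [hu.2]
        have hsup : Tendsto φ (nhdsWithin 1 (Iic 1)) (nhds 0) := by
          rw [show Iic (1:ℝ) = insert 1 (Iio 1) by rw [Iio_insert], nhdsWithin_insert]
          apply Tendsto.sup
          · simpa [hφ1] using tendsto_pure_nhds φ 1
          · exact tend1
        have : Tendsto (fun u => φ (u + h)) (nhdsWithin (1-h) (Icc 0 (1-h)))
            (nhds (φ ((1-h) + h))) := by
          rw [sub_add_cancel, hφ1]
          exact hsup.comp hmap
        exact this
      · exact ((hderφ (1-h) ⟨h1h, by linarith⟩).continuousAt).continuousWithinAt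
    · -- interior
      exact ((hderψ s ⟨h0, h1⟩).continuousAt).continuousWithinAt
  -- strict antitonicity on the closed interval
  have hanti : StrictAntiOn ψ (Icc 0 (1-h)) := by
    apply strictAntiOn_of_deriv_neg (convex_Icc _ _) hcontψ
    intro x hx
    rw [interior_Icc] at hx
    rw [(hderψ x hx).deriv]
    exact hneg x hx
  refine ⟨fun s hs => ⟨hderψ s hs, hneg s hs⟩, hanti.mono Ioo_subset_Icc_self, ?_⟩
  -- sSup part
  have hψ0 : ψ 0 = Hpdf k (Hinv h) * Hinv h - Hpdf k (Hinv 0) * Hinv 0 := by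
    simp only [hψdef, zero_add]
  have hψ1 : ψ (1-h) = Hpdf k (Hinv 1) * Hinv 1 - Hpdf k (Hinv (1-h)) * Hinv (1-h) := by
    simp only [hψdef, sub_add_cancel]
  rw [← hψ0, ← hψ1]
  apply IsGreatest.csSup_eq
  constructor
  · -- max is attained
    rcases le_total (|ψ 0|) (|ψ (1-h)|) with hle | hle
    · rw [max_eq_right hle]
      exact mem_image_of_mem _ (right_mem_Icc.2 h1h.le)
    · rw [max_eq_left hle]
      exact mem_image_of_mem _ (left_mem_Icc.2 h1h.le)
  · rintro y ⟨s, hs, rfl⟩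
    have hub : ψ s ≤ ψ 0 := hanti.antitoneOn (left_mem_Icc.2 h1h.le) hs hs.1
    have hlb : ψ (1-h) ≤ ψ s := hanti.antitoneOn hs (right_mem_Icc.2 h1h.le) hs.2
    have h2 : ψ 0 ≤ max (|ψ 0|) (|ψ (1-h)|) := le_trans (le_abs_self _) (le_max_left _ _)
    have h3 : -(max (|ψ 0|) (|ψ (1-h)|)) ≤ ψ (1-h) := by
      have := neg_abs_le (ψ (1-h))
      have := le_max_right (|ψ 0|) (|ψ (1-h)|)
      linarith
    show |ψ s| ≤ max (|ψ 0|) (|ψ (1-h)|)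
    rw [abs_le]
    constructor <;> linarith
end

section
/- Fix an integer k ≥ 1 and let φ(s) = H_k'(H_k^{-1}(s)) H_k^{-1}(s). Then as h ↓ 0, φ(h) = k h (1 + o(1)); that is, lim_{h→0+} φ(h)/(k h) = 1. -/
open Real MeasureTheory Filter Set

lemma cont_integrand (k : ℕ) : Continuous (fun t : ℝ => t ^ (k-1) * Real.exp (-t) / (Nat.factorial (k-1) : ℝ)) := by
  continuity

lemma Hgamma_eq (k : ℕ) (x : ℝ) :
    Hgamma k x = (∫ t in (0:ℝ)..x, t ^ (k - 1) * Real.exp (-t)) / (Nat.factorial (k - 1) : ℝ) := by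
  rw [Hgamma, intervalIntegral.integral_div]

lemma pow_integral (k : ℕ) (hk : 1 ≤ k) (x : ℝ) :
    (∫ t in (0:ℝ)..x, t ^ (k-1)) = x ^ k / k := by
  rw [integral_pow, Nat.sub_add_cancel hk]
  have h1 : ((k - 1 : ℕ) : ℝ) + 1 = (k:ℝ) := by push_cast [Nat.cast_sub hk]; ring
  rw [h1, zero_pow (by omega : k ≠ 0)]
  ring

lemma Hgamma_lb (k : ℕ) (hk : 1 ≤ k) (x : ℝ) (hx : 0 ≤ x) :
    x ^ k * Real.exp (-x) / (k : ℝ) ≤ Hgamma k x * (Nat.factorial (k-1) : ℝ) := by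
  have hfact : (0:ℝ) < (Nat.factorial (k-1) : ℝ) := by positivity
  rw [Hgamma_eq, div_mul_cancel₀ _ hfact.ne']
  have : (∫ t in (0:ℝ)..x, t ^ (k-1) * Real.exp (-x)) ≤ ∫ t in (0:ℝ)..x, t ^ (k-1) * Real.exp (-t) := by
    apply intervalIntegral.integral_mono_on hx
    · exact (Continuous.intervalIntegrable (by continuity) _ _)
    · exact (Continuous.intervalIntegrable (by continuity) _ _)
    · intro t ht
      have h1 : (0:ℝ) ≤ t ^ (k-1) := pow_nonneg ht.1 _
      exact mul_le_mul_of_nonneg_left (Real.exp_le_exp.2 (by linarith [ht.2])) h1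
  calc x ^ k * Real.exp (-x) / (k:ℝ) = (∫ t in (0:ℝ)..x, t ^ (k-1)) * Real.exp (-x) := by
        rw [pow_integral k hk]; ring
    _ = ∫ t in (0:ℝ)..x, t ^ (k-1) * Real.exp (-x) := by
        rw [intervalIntegral.integral_mul_const]
    _ ≤ _ := this

lemma Hgamma_ub (k : ℕ) (hk : 1 ≤ k) (x : ℝ) (hx : 0 ≤ x) :
    Hgamma k x * (Nat.factorial (k-1) : ℝ) ≤ x ^ k / (k : ℝ) := by
  have hfact : (0:ℝ) < (Nat.factorial (k-1) : ℝ) := by positivity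
  rw [Hgamma_eq, div_mul_cancel₀ _ hfact.ne']
  have : (∫ t in (0:ℝ)..x, t ^ (k-1) * Real.exp (-t)) ≤ ∫ t in (0:ℝ)..x, t ^ (k-1) := by
    apply intervalIntegral.integral_mono_on hx
    · exact (Continuous.intervalIntegrable (by continuity) _ _)
    · exact (Continuous.intervalIntegrable (by continuity) _ _)
    · intro t ht
      have h1 : (0:ℝ) ≤ t ^ (k-1) := pow_nonneg ht.1 _
      calc t ^ (k-1) * Real.exp (-t) ≤ t ^ (k-1) * 1 :=
            mul_le_mul_of_nonneg_left ((Real.exp_le_one_iff).2 (by linarith [ht.1])) h1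
        _ = t ^ (k-1) := mul_one _
  rw [← pow_integral k hk]
  exact this

lemma Hgamma_pos (k : ℕ) (hk : 1 ≤ k) (x : ℝ) (hx : 0 < x) : 0 < Hgamma k x := by
  have hfact : (0:ℝ) < (Nat.factorial (k-1) : ℝ) := by positivity
  have h := Hgamma_lb k hk x hx.le
  have h2 : (0:ℝ) < x ^ k * Real.exp (-x) / (k:ℝ) := by positivity
  nlinarith

lemma Hgamma_mono (k : ℕ) (x y : ℝ) (hxy : 0 ≤ y) (h : y ≤ x) : Hgamma k y ≤ Hgamma k x := by
  have := intervalIntegral.integral_add_adjacent_intervals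
    (μ := volume) (a := (0:ℝ)) (b := y) (c := x)
    ((cont_integrand k).intervalIntegrable _ _) ((cont_integrand k).intervalIntegrable _ _)
  have hnn : 0 ≤ ∫ t in y..x, t ^ (k-1) * Real.exp (-t) / (Nat.factorial (k-1) : ℝ) := by
    apply intervalIntegral.integral_nonneg h
    intro t ht
    have : 0 ≤ t := le_trans hxy ht.1
    positivity
  unfold Hgamma
  linarith [this]

theorem stmt13 (k : ℕ) (hk : 1 ≤ k) (Hinv : ℝ → ℝ)
    (hinv : ∀ s ∈ Set.Ioo (0:ℝ) 1, Hgamma k (Hinv s) = s ∧ 0 < Hinv s) :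
    Filter.Tendsto (fun h => Hpdf k (Hinv h) * Hinv h / ((k : ℝ) * h))
      (nhdsWithin 0 (Set.Ioi 0)) (nhds 1) := by
  have hfact : (0:ℝ) < (Nat.factorial (k-1) : ℝ) := by positivity
  have hkpos : (0:ℝ) < (k:ℝ) := by exact_mod_cast hk
  set g : ℝ → ℝ := fun x => Hpdf k x * x / ((k:ℝ) * Hgamma k x) with hg
  -- g x between exp(-x) and 1 for x > 0
  have hA : ∀ x : ℝ, 0 < x → Hpdf k x * x = x ^ k * Real.exp (-x) / (Nat.factorial (k-1) : ℝ) := by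
    intro x hx
    rw [Hpdf]
    rw [div_mul_eq_mul_div, mul_right_comm, ← pow_succ, Nat.sub_add_cancel hk]
  have hgub : ∀ x : ℝ, 0 < x → g x ≤ 1 := by
    intro x hx
    rw [hg]
    have hD : 0 < (k:ℝ) * Hgamma k x := mul_pos hkpos (Hgamma_pos k hk x hx)
    rw [div_le_one hD, hA x hx]
    have := Hgamma_lb k hk x hx.le
    rw [div_le_iff₀ hkpos] at this
    calc x ^ k * Real.exp (-x) / (Nat.factorial (k-1) : ℝ)
        ≤ Hgamma k x * (Nat.factorial (k-1):ℝ) * (k:ℝ) / (Nat.factorial (k-1):ℝ) := by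
          exact div_le_div_of_nonneg_right this hfact.le
      _ = (k:ℝ) * Hgamma k x := by field_simp
  have hglb : ∀ x : ℝ, 0 < x → Real.exp (-x) ≤ g x := by
    intro x hx
    rw [hg]
    have hD : 0 < (k:ℝ) * Hgamma k x := mul_pos hkpos (Hgamma_pos k hk x hx)
    rw [le_div_iff₀ hD, hA x hx]
    have := Hgamma_ub k hk x hx.le
    have h2 : (k:ℝ) * Hgamma k x ≤ x ^ k / (Nat.factorial (k-1):ℝ) := by
      rw [le_div_iff₀ hfact]
      rw [le_div_iff₀ hkpos] at this
      nlinarith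
    have hexp : 0 < Real.exp (-x) := Real.exp_pos _
    calc Real.exp (-x) * ((k:ℝ) * Hgamma k x) ≤ Real.exp (-x) * (x ^ k / (Nat.factorial (k-1):ℝ)) :=
          mul_le_mul_of_nonneg_left h2 hexp.le
      _ = x ^ k * Real.exp (-x) / (Nat.factorial (k-1):ℝ) := by ring
  -- g tends to 1 as x → 0+
  have hgtend : Tendsto g (nhdsWithin 0 (Set.Ioi 0)) (nhds 1) := by
    refine tendsto_of_tendsto_of_tendsto_of_le_of_le'
      (g := fun x : ℝ => Real.exp (-x)) (h := fun _ : ℝ => (1:ℝ)) ?_ ?_ ?_ ?_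
    · have : Tendsto (fun x : ℝ => Real.exp (-x)) (nhds 0) (nhds 1) := by
        have := (Real.continuous_exp.comp continuous_neg).tendsto 0
        simpa [Function.comp_def] using this
      exact this.mono_left nhdsWithin_le_nhds
    · exact tendsto_const_nhds
    · filter_upwards [self_mem_nhdsWithin] with x hx using hglb x hx
    · filter_upwards [self_mem_nhdsWithin] with x hx using hgub x hx
  -- Hinv tends to 0 within Ioi 0
  have hinvt : Tendsto Hinv (nhdsWithin 0 (Set.Ioi 0)) (nhdsWithin 0 (Set.Ioi 0)) := by
    rw [tendsto_nhdsWithin_iff]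
    constructor
    · rw [tendsto_order]
      constructor
      · intro a ha
        filter_upwards [Ioo_mem_nhdsGT_of_mem (by constructor <;> norm_num : (0:ℝ) ∈ Set.Ico 0 1)]
          with s hs
        exact lt_trans ha (hinv s hs).2
      · intro a ha
        set c := min (Hgamma k (min a 1)) 1 with hc
        have hma : 0 < min a 1 := lt_min ha one_pos
        have hcpos : 0 < c := lt_min (Hgamma_pos k hk _ hma) one_pos
        filter_upwards [Ioo_mem_nhdsGT_of_mem (by constructor <;> [rfl; exact hcpos] : (0:ℝ) ∈ Set.Ico 0 c)]
          with s hs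
        have hs1 : s ∈ Set.Ioo (0:ℝ) 1 := ⟨hs.1, lt_of_lt_of_le hs.2 (min_le_right _ _)⟩
        obtain ⟨heq, hpos⟩ := hinv s hs1
        by_contra hcon
        push_neg at hcon
        have h1 : min a 1 ≤ Hinv s := le_trans (min_le_left _ _) hcon
        have h2 : Hgamma k (min a 1) ≤ Hgamma k (Hinv s) := Hgamma_mono k _ _ hma.le h1
        rw [heq] at h2
        have : c ≤ s := le_trans (min_le_left _ _) h2
        exact absurd hs.2 (not_lt.2 this)
    · filter_upwards [Ioo_mem_nhdsGT_of_mem (by constructor <;> norm_num : (0:ℝ) ∈ Set.Ico 0 1)]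
        with s hs
      exact (hinv s hs).2
  have := hgtend.comp hinvt
  apply this.congr'
  filter_upwards [Ioo_mem_nhdsGT_of_mem (by constructor <;> norm_num : (0:ℝ) ∈ Set.Ico 0 1)]
    with s hs
  simp only [Function.comp, hg]
  rw [(hinv s hs).1]
end

section
/- Fix an integer k ≥ 1 and let φ(s) = H_k'(H_k^{-1}(s)) H_k^{-1}(s). Then as h ↓ 0, φ(1−h) = h · log(1/h) · (1 + o(1)); that is, lim_{h→0+} φ(1−h)/(h log(1/h)) = 1. -/
open Real MeasureTheory Filter Set
open Topology

noncomputable def Psum (m : ℕ) (x : ℝ) : ℝ :=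
  ∑ j ∈ Finset.range (m+1), x ^ j / (Nat.factorial j : ℝ)

lemma psum_hasDerivAt (m : ℕ) (x : ℝ) :
    HasDerivAt (fun x => Real.exp (-x) * Psum m x)
      (-(x ^ m * Real.exp (-x) / (Nat.factorial m : ℝ))) x := by
  have he : HasDerivAt (fun x : ℝ => Real.exp (-x)) (-Real.exp (-x)) x := by
    simpa using (hasDerivAt_neg x).exp
  have hP : HasDerivAt (fun x => Psum m x)
      (∑ j ∈ Finset.range m, x ^ j / (Nat.factorial j : ℝ)) x := by
    have : HasDerivAt (fun x => Psum m x)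
        (∑ j ∈ Finset.range (m+1), (j : ℝ) * x ^ (j-1) / (Nat.factorial j : ℝ)) x := by
      apply HasDerivAt.fun_sum
      intro j _
      exact (hasDerivAt_pow j x).div_const _
    convert this using 1
    rw [Finset.sum_range_succ']
    simp only [Nat.cast_zero, zero_mul, Nat.factorial_zero, Nat.cast_one, zero_div, add_zero]
    apply Finset.sum_congr rfl
    intro i _
    have : (Nat.factorial (i+1) : ℝ) = (i+1) * Nat.factorial i := by
      rw [Nat.factorial_succ]; push_cast; ring
    rw [this]
    have hi : ((i:ℝ)+1) ≠ 0 := by positivity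
    have hf : (Nat.factorial i : ℝ) ≠ 0 := by positivity
    simp only [Nat.add_sub_cancel]; push_cast
    field_simp
  have := (he.fun_mul hP)
  refine this.congr_deriv ?_
  have : Psum m x - (∑ j ∈ Finset.range m, x ^ j / (Nat.factorial j : ℝ))
      = x ^ m / (Nat.factorial m : ℝ) := by
    rw [Psum, Finset.sum_range_succ]; ring
  have h2 : (∑ j ∈ Finset.range m, x ^ j / (Nat.factorial j : ℝ))
      = Psum m x - x ^ m / (Nat.factorial m : ℝ) := by linarith
  rw [h2]; ring

lemma hgamma_eq (m : ℕ) (x : ℝ) :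
    Hgamma (m+1) x = 1 - Real.exp (-x) * Psum m x := by
  have key : ∀ y : ℝ, HasDerivAt (fun x => 1 - Real.exp (-x) * Psum m x)
      (y ^ m * Real.exp (-y) / (Nat.factorial m : ℝ)) y := by
    intro y
    simpa using (psum_hasDerivAt m y).const_sub 1
  have hcont : Continuous fun t : ℝ => t ^ m * Real.exp (-t) / (Nat.factorial m : ℝ) := by
    continuity
  have := intervalIntegral.integral_eq_sub_of_hasDerivAt
    (f := fun x => 1 - Real.exp (-x) * Psum m x) (a := 0) (b := x)
    (fun t _ => key t) (hcont.intervalIntegrable 0 x)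
  have h0 : Psum m 0 = 1 := by
    rw [Psum, Finset.sum_range_succ']
    simp
  simp only [Hgamma, Nat.add_sub_cancel]
  rw [this]
  simp [h0]

lemma psum_ge_one (m : ℕ) {x : ℝ} (hx : 0 ≤ x) : 1 ≤ Psum m x := by
  rw [Psum, Finset.sum_range_succ']
  simp only [Nat.factorial_zero, Nat.cast_one, pow_zero]
  have : (0:ℝ) ≤ ∑ i ∈ Finset.range m, x ^ (i+1) / (Nat.factorial (i+1) : ℝ) := by
    apply Finset.sum_nonneg
    intro i _
    positivity
  linarith

lemma psum_le (m : ℕ) {x : ℝ} (hx : 1 ≤ x) : Psum m x ≤ (m+1) * x ^ m := by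
  rw [Psum]
  calc ∑ j ∈ Finset.range (m+1), x ^ j / (Nat.factorial j : ℝ)
      ≤ ∑ j ∈ Finset.range (m+1), x ^ m := by
        apply Finset.sum_le_sum
        intro j hj
        have hj' : j ≤ m := Nat.lt_succ_iff.mp (Finset.mem_range.mp hj)
        have h1 : x ^ j / (Nat.factorial j : ℝ) ≤ x ^ j := by
          apply div_le_self (by positivity)
          exact_mod_cast Nat.one_le_iff_ne_zero.mpr (Nat.factorial_ne_zero j)
        have h2 : x ^ j ≤ x ^ m := pow_le_pow_right₀ (by linarith) hj'
        linarith
    _ = (m+1) * x ^ m := by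
        rw [Finset.sum_const, Finset.card_range]
        push_cast; ring

lemma tendsto_factor_one (m : ℕ) :
    Tendsto (fun x : ℝ => x ^ m / ((Nat.factorial m : ℝ) * Psum m x)) atTop (𝓝 1) := by
  have key : Tendsto (fun x : ℝ => (Nat.factorial m : ℝ) * Psum m x / x ^ m) atTop (𝓝 1) := by
    have heq : ∀ x : ℝ, (Nat.factorial m : ℝ) * Psum m x / x ^ m
        = ∑ j ∈ Finset.range (m+1), (Nat.factorial m : ℝ) / (Nat.factorial j : ℝ) * (x ^ j / x ^ m) := by
      intro x
      rw [Psum, Finset.mul_sum, Finset.sum_div]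
      apply Finset.sum_congr rfl
      intro j _
      ring
    have hsum : Tendsto (fun x : ℝ => ∑ j ∈ Finset.range (m+1),
        (Nat.factorial m : ℝ) / (Nat.factorial j : ℝ) * (x ^ j / x ^ m)) atTop
        (𝓝 (∑ j ∈ Finset.range (m+1), if j = m then 1 else 0)) := by
      apply tendsto_finset_sum
      intro j hj
      have hj' : j ≤ m := Nat.lt_succ_iff.mp (Finset.mem_range.mp hj)
      rcases eq_or_lt_of_le hj' with rfl | hlt
      · simp only [if_pos rfl]
        have : ∀ᶠ x : ℝ in atTop,
            (Nat.factorial j : ℝ) / (Nat.factorial j : ℝ) * (x ^ j / x ^ j) = 1 := by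
          filter_upwards [eventually_gt_atTop (0:ℝ)] with x hx
          rw [div_self (by positivity : (Nat.factorial j:ℝ) ≠ 0), div_self (by positivity : x ^ j ≠ 0)]
          ring
        exact Tendsto.congr' (this.mono fun x hx => hx.symm) tendsto_const_nhds
      · simp only [if_neg (Nat.ne_of_lt hlt)]
        have h0 : Tendsto (fun x : ℝ => (x ^ (m - j))⁻¹) atTop (𝓝 0) :=
          (tendsto_pow_atTop (Nat.sub_ne_zero_of_lt hlt)).inv_tendsto_atTop
        have heq2 : ∀ᶠ x : ℝ in atTop,
            (x ^ (m - j))⁻¹ = x ^ j / x ^ m := by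
          filter_upwards [eventually_gt_atTop (0:ℝ)] with x hx
          have hm : x ^ m = x ^ (m - j) * x ^ j := by
            rw [← pow_add, Nat.sub_add_cancel hj']
          rw [hm, eq_div_iff (by positivity : x ^ (m-j) * x ^ j ≠ 0)]
          field_simp
        have := (Tendsto.congr' heq2 h0).const_mul ((Nat.factorial m : ℝ) / (Nat.factorial j : ℝ))
        simpa using this
    have hval : (∑ j ∈ Finset.range (m+1), if j = m then (1:ℝ) else 0) = 1 := by
      rw [Finset.sum_ite_eq' (Finset.range (m+1)) m (fun _ => (1:ℝ))]
      simp
    rw [← hval]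
    exact Tendsto.congr (fun x => (heq x).symm) hsum
  have := (key.inv₀ one_ne_zero)
  simp only [inv_one] at this
  apply this.congr
  intro x
  rw [inv_div]

lemma tendsto_log_psum_div (m : ℕ) :
    Tendsto (fun x : ℝ => Real.log (Psum m x) / x) atTop (𝓝 0) := by
  have hub : Tendsto (fun x : ℝ => (Real.log (m+1) + m * Real.log x) / x) atTop (𝓝 0) := by
    have h1 : Tendsto (fun x : ℝ => Real.log (m+1) / x) atTop (𝓝 0) :=
      tendsto_const_nhds.div_atTop tendsto_id
    have h2 : Tendsto (fun x : ℝ => (m:ℝ) * (Real.log x / x)) atTop (𝓝 ((m:ℝ) * 0)) :=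
      (Real.isLittleO_log_id_atTop.tendsto_div_nhds_zero).const_mul _
    have := h1.add h2
    simp only [mul_zero, add_zero] at this
    apply this.congr
    intro x
    ring
  apply tendsto_of_tendsto_of_tendsto_of_le_of_le' tendsto_const_nhds hub
  · filter_upwards [eventually_ge_atTop (1:ℝ)] with x hx
    have := psum_ge_one m (by linarith : (0:ℝ) ≤ x)
    have hlog : 0 ≤ Real.log (Psum m x) := Real.log_nonneg this
    positivity
  · filter_upwards [eventually_ge_atTop (1:ℝ)] with x hx
    have hle : Psum m x ≤ (m+1) * x ^ m := psum_le m hx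
    have h1 : (0:ℝ) < Psum m x := lt_of_lt_of_le one_pos (psum_ge_one m (by linarith))
    have hlog : Real.log (Psum m x) ≤ Real.log ((m+1) * x ^ m) := Real.log_le_log h1 hle
    have : Real.log ((m+1) * x ^ m) = Real.log (m+1) + m * Real.log x := by
      rw [Real.log_mul (by positivity) (by positivity), Real.log_pow]
    rw [this] at hlog
    apply div_le_div_of_nonneg_right hlog (by linarith) |>.trans_eq rfl

lemma tendsto_g (m : ℕ) :
    Tendsto (fun x : ℝ => x ^ (m+1) /
      ((Nat.factorial m : ℝ) * Psum m x * (x - Real.log (Psum m x)))) atTop (𝓝 1) := by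
  have ha := tendsto_factor_one m
  have hb : Tendsto (fun x : ℝ => x / (x - Real.log (Psum m x))) atTop (𝓝 1) := by
    have h1 : Tendsto (fun x : ℝ => (x - Real.log (Psum m x)) / x) atTop (𝓝 1) := by
      have h2 : Tendsto (fun x : ℝ => 1 - Real.log (Psum m x) / x) atTop (𝓝 (1 - 0)) :=
        tendsto_const_nhds.sub (tendsto_log_psum_div m)
      simp only [sub_zero] at h2
      apply Tendsto.congr' _ h2
      filter_upwards [eventually_gt_atTop (0:ℝ)] with x hx
      rw [sub_div, div_self (ne_of_gt hx)]
    have := h1.inv₀ one_ne_zero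
    simp only [inv_one] at this
    apply this.congr
    intro x
    rw [inv_div]
  have := ha.mul hb
  simp only [mul_one] at this
  apply this.congr
  intro x
  rw [div_mul_div_comm, ← pow_succ, mul_assoc]


theorem stmt14 (k : ℕ) (hk : 1 ≤ k) (Hinv : ℝ → ℝ)
    (hinv : ∀ s ∈ Set.Ioo (0:ℝ) 1, Hgamma k (Hinv s) = s ∧ 0 < Hinv s) :
    Filter.Tendsto (fun h => Hpdf k (Hinv (1 - h)) * Hinv (1 - h) / (h * Real.log (1 / h)))
      (nhdsWithin 0 (Set.Ioi 0)) (nhds 1) := by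
  obtain ⟨m, rfl⟩ : ∃ m, k = m + 1 := ⟨k - 1, (Nat.succ_pred_eq_of_pos hk).symm⟩
  have hmem : Set.Ioo (0:ℝ) 1 ∈ nhdsWithin (0:ℝ) (Set.Ioi 0) :=
    Ioo_mem_nhdsGT_of_mem ⟨le_refl 0, one_pos⟩
  -- basic facts on the event
  have hkey : ∀ h : ℝ, h ∈ Set.Ioo (0:ℝ) 1 →
      Real.exp (-(Hinv (1-h))) * Psum m (Hinv (1-h)) = h ∧ 0 < Hinv (1-h) := by
    intro h hh
    have h1h : (1 - h) ∈ Set.Ioo (0:ℝ) 1 := ⟨by linarith [hh.2], by linarith [hh.1]⟩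
    obtain ⟨hH, hpos⟩ := hinv _ h1h
    rw [hgamma_eq] at hH
    constructor
    · linarith
    · exact hpos
  -- Hinv (1-h) → ∞
  have htend : Tendsto (fun h => Hinv (1 - h)) (nhdsWithin (0:ℝ) (Set.Ioi 0)) atTop := by
    apply tendsto_atTop_mono' _ _
      (tendsto_neg_atBot_atTop.comp Real.tendsto_log_nhdsGT_zero)
    filter_upwards [hmem] with h hh
    obtain ⟨heq, hpos⟩ := hkey h hh
    have hP : 1 ≤ Psum m (Hinv (1-h)) := psum_ge_one m hpos.le
    have hle : Real.exp (-(Hinv (1-h))) ≤ h := by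
      nlinarith [Real.exp_pos (-(Hinv (1-h)))]
    have := Real.log_le_log (Real.exp_pos _) hle
    rw [Real.log_exp] at this
    simpa using (neg_le_neg this).trans_eq (neg_neg _)
  have hcomp := (tendsto_g m).comp htend
  apply Tendsto.congr' _ hcomp
  filter_upwards [hmem] with h hh
  obtain ⟨heq, hpos⟩ := hkey h hh
  set x := Hinv (1 - h) with hx
  have hP1 : 1 ≤ Psum m x := psum_ge_one m hpos.le
  have hPpos : 0 < Psum m x := lt_of_lt_of_le one_pos hP1
  have hlogh : Real.log h = -x + Real.log (Psum m x) := by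
    rw [← heq, Real.log_mul (Real.exp_ne_zero _) (ne_of_gt hPpos), Real.log_exp]
  have hloginv : Real.log (1 / h) = x - Real.log (Psum m x) := by
    rw [one_div, Real.log_inv, hlogh]; ring
  have hLpos : 0 < x - Real.log (Psum m x) := by
    rw [← hloginv, one_div, Real.log_inv]
    have : Real.log h < 0 := Real.log_neg hh.1 hh.2
    linarith
  show x ^ (m+1) / ((Nat.factorial m : ℝ) * Psum m x * (x - Real.log (Psum m x)))
      = Hpdf (m+1) x * x / (h * Real.log (1 / h))
  rw [hloginv, ← heq]
  simp only [Hpdf, Nat.add_sub_cancel]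
  have hE : Real.exp (-x) ≠ 0 := Real.exp_ne_zero _
  have hF : (Nat.factorial m : ℝ) ≠ 0 := by positivity
  field_simp
  ring
end
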